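/- Let f be a grouplike element of R⟨⟨e_0,e_1⟩⟩ (Δ_⧢(f) = f ⊗ f, f[∅] = 1) for a ℚ-algebra R. Then h = f^{-1} e_1 f is a Lie series (primitive for Δ_⧢). Conversely, if f ∈ R⟨⟨e_0,e_1⟩⟩ with f[∅] = 1 and f[e_1^n] = 0 for all n ≥ 1, and f^{-1} e_1 f is primitive, then f is grouplike. -/

import Mathlib

/-- The multiset of shuffles of two words. -/
def shuffles : List (Fin 2) → List (Fin 2) → Multiset (List (Fin 2))
  | [], ys => {ys}
  | x :: xs, [] => {x :: xs}
  | x :: xs, y :: ys =>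
      (shuffles xs (y :: ys)).map (x :: ·) + (shuffles (x :: xs) ys).map (y :: ·)
termination_by a b => a.length + b.length

/-- Concatenation product of noncommutative series. -/
def convMul {R : Type*} [Semiring R] (u v : List (Fin 2) → R) : List (Fin 2) → R :=
  fun w => ∑ i ∈ Finset.range (w.length + 1), u (w.take i) * v (w.drop i)

/-- The unit series `1`. -/
def oneSeries {R : Type*} [Semiring R] : List (Fin 2) → R :=
  fun w => if w = [] then 1 else 0

/-- The series `e₁`. -/
def e1Series {R : Type*} [Semiring R] : List (Fin 2) → R :=
  fun w => if w = [(1 : Fin 2)] then 1 else 0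

/-- `f` is grouplike for the shuffle coproduct: `f[∅] = 1` and
`f[w₁ ⧢ w₂] = f[w₁]·f[w₂]`. -/
def IsGrouplike {R : Type*} [CommRing R] (f : List (Fin 2) → R) : Prop :=
  f [] = 1 ∧ ∀ w₁ w₂ : List (Fin 2), ((shuffles w₁ w₂).map f).sum = f w₁ * f w₂

/-- `h` is a Lie series (primitive for the shuffle coproduct). -/
def IsPrimitive {R : Type*} [CommRing R] (h : List (Fin 2) → R) : Prop :=
  h [] = 0 ∧ ∀ w₁ w₂ : List (Fin 2), w₁ ≠ [] → w₂ ≠ [] →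
    ((shuffles w₁ w₂).map h).sum = 0

namespace S17

abbrev W := List (Fin 2)

def splits : W → Multiset (W × W)
  | [] => {([], [])}
  | x :: xs => ([], x::xs) ::ₘ (splits xs).map (fun p => (x :: p.1, p.2))

variable {R : Type*} [Semiring R]

lemma convMul_eq_splits (u v : W → R) (w : W) :
    convMul u v w = ((splits w).map (fun p => u p.1 * v p.2)).sum := by
  induction w generalizing u with
  | nil => simp [convMul, splits]
  | cons x xs ih =>
    have key : convMul u v (x :: xs) = u [] * v (x :: xs) + convMul (fun s => u (x :: s)) v xs := by
      show (∑ i ∈ Finset.range ((x :: xs).length + 1), u ((x :: xs).take i) * v ((x :: xs).drop i)) = _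
      rw [Finset.sum_range_succ']
      simp only [List.take_succ_cons, List.drop_succ_cons, List.length_cons, List.take_zero,
        List.drop_zero]
      rw [add_comm]
      rfl
    rw [key, ih (fun s => u (x :: s))]
    simp [splits, Multiset.map_map, Function.comp]

lemma shuffles_nil_left (w : W) : shuffles [] w = {w} := by
  simp [shuffles]

lemma shuffles_nil_right (w : W) : shuffles w [] = {w} := by
  cases w <;> simp [shuffles]

lemma convMul_nil (u v : W → R) : convMul u v [] = u [] * v [] := by
  simp [convMul_eq_splits, splits]

lemma convMul_cons (u v : W → R) (x : Fin 2) (w : W) :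
    convMul u v (x :: w) = u [] * v (x :: w) + convMul (fun s => u (x :: s)) v w := by
  simp [convMul_eq_splits, splits, Multiset.map_map, Function.comp]

lemma convMul_one_left (u : W → R) : convMul oneSeries u = u := by
  funext w
  cases w with
  | nil => simp [convMul_nil, oneSeries]
  | cons x xs =>
    rw [convMul_cons]
    simp [oneSeries, convMul_eq_splits]

lemma convMul_one_right (u : W → R) : convMul u oneSeries = u := by
  funext w
  induction w generalizing u with
  | nil => simp [convMul_nil, oneSeries]
  | cons x xs ih =>
    rw [convMul_cons, ih (fun s => u (x :: s))]
    simp [oneSeries]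

lemma convMul_add_left (u u' v : W → R) :
    convMul (fun s => u s + u' s) v = fun w => convMul u v w + convMul u' v w := by
  funext w; simp [convMul, add_mul, Finset.sum_add_distrib]

lemma convMul_smul_left (c : R) (u v : W → R) :
    convMul (fun s => c * u s) v = fun w => c * convMul u v w := by
  funext w; simp [convMul, mul_assoc, Finset.mul_sum]

lemma convMul_assoc (u v w : W → R) :
    convMul (convMul u v) w = convMul u (convMul v w) := by
  funext t
  induction t generalizing u with
  | nil => simp [convMul_nil, mul_assoc]
  | cons x t ih =>
    rw [convMul_cons, convMul_cons, convMul_nil]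
    have h1 : (fun s => convMul u v (x :: s))
        = fun s => u [] * v (x :: s) + convMul (fun s' => u (x :: s')) v s := by
      funext s; rw [convMul_cons]
    rw [h1]
    rw [convMul_add_left, convMul_smul_left (u []) (fun s => v (x :: s)) w]
    beta_reduce
    rw [ih (fun s => u (x :: s))]
    rw [convMul_cons v w x t]
    rw [mul_add, ← mul_assoc, ← add_assoc]

def Ser (R : Type*) := W → R

namespace Ser
variable {R : Type*} [Semiring R]

instance : AddCommMonoid (Ser R) := Pi.addCommMonoid

instance : Semiring (Ser R) :=
  { (inferInstance : AddCommMonoid (Ser R)) with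
    mul := convMul
    one := oneSeries
    mul_assoc := fun a b c => convMul_assoc a b c
    one_mul := fun a => convMul_one_left a
    mul_one := fun a => convMul_one_right a
    zero_mul := fun a => by
      funext w; show convMul 0 a w = 0
      simp [convMul]
    mul_zero := fun a => by
      funext w; show convMul a 0 w = 0
      simp [convMul]
    left_distrib := fun a b c => by
      funext w; show convMul a (fun s => b s + c s) w = convMul a b w + convMul a c w
      simp [convMul, mul_add, Finset.sum_add_distrib]
    right_distrib := fun a b c => by
      funext w; show convMul (fun s => a s + b s) c w = convMul a c w + convMul b c w
      simp [convMul, add_mul, Finset.sum_add_distrib] }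

lemma mul_def (a b : Ser R) : a * b = convMul a b := rfl
lemma one_def : (1 : Ser R) = oneSeries := rfl
lemma add_apply (a b : Ser R) (w : W) : (a + b) w = a w + b w := rfl
lemma zero_apply (w : W) : (0 : Ser R) w = 0 := rfl

lemma sum_apply (m : Multiset (Ser R)) (w : W) :
    m.sum w = (m.map (fun x => x w)).sum := by
  induction m using Multiset.induction with
  | empty => rfl
  | cons a s ih => simp [ih, add_apply]

end Ser

lemma bind_cons_fn {α β : Type*} (m : Multiset α) (c : α → β) (d : α → Multiset β) :
    (m.bind (fun s => c s ::ₘ d s)) = m.map c + m.bind d := by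
  induction m using Multiset.induction with
  | empty => simp
  | cons a s ih =>
    simp only [Multiset.cons_bind, Multiset.map_cons, ih]
    rw [Multiset.cons_add, Multiset.cons_add]
    rw [add_left_comm]

lemma bind_singleton_id {α : Type*} (s : Multiset α) : s.bind (fun x => {x}) = s := by
  simpa using Multiset.bind_singleton (s := s) id

lemma bialg : ∀ (a b : W), (shuffles a b).bind splits
    = (splits a).bind (fun p => (splits b).bind (fun q =>
        (shuffles p.1 q.1).bind (fun s => (shuffles p.2 q.2).map (fun t => (s, t)))))
  | [], b => by
    simp [shuffles_nil_left, splits, Multiset.singleton_bind, Multiset.bind_singleton, bind_singleton_id]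
  | x :: xs, [] => by
    rw [shuffles_nil_right, Multiset.singleton_bind]
    simp only [show splits ([] : W) = {([], [])} from rfl, Multiset.bind_singleton,
      Multiset.singleton_bind, shuffles_nil_right, Multiset.map_singleton]
    simp [bind_singleton_id]
  | x :: xs, y :: ys => by
    have IH1 := bialg xs (y :: ys)
    have IH2 := bialg (x :: xs) ys
    rw [shuffles, Multiset.add_bind]
    simp only [Multiset.bind_map, Function.comp, splits, bind_cons_fn]
    rw [← Multiset.map_bind, ← Multiset.map_bind, IH1, IH2]
    simp only [shuffles, splits, Multiset.add_bind, Multiset.cons_bind, Multiset.bind_map,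
      Multiset.map_bind, Multiset.singleton_bind, bind_cons_fn, Multiset.bind_add,
      Multiset.map_add, Multiset.map_map, Function.comp, Multiset.map_cons,
      shuffles_nil_right, shuffles_nil_left]
    abel
termination_by a b => a.length + b.length


variable {R : Type*} [Semiring R]

lemma convMul_eq_splits' (u v : W → R) :
    convMul u v = fun w => ((splits w).map (fun p => u p.1 * v p.2)).sum := by
  funext w; exact convMul_eq_splits u v w

def Delta (u : Ser R) : Ser (Ser R) := fun a b => ((shuffles a b).map u).sum

lemma Delta_mul (u v : Ser R) : Delta (u * v) = Delta u * Delta v := by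
  funext a b
  show ((shuffles a b).map (convMul u v)).sum = (convMul (Delta u) (Delta v) a) b
  rw [convMul_eq_splits' u v, convMul_eq_splits (Delta u) (Delta v) a]
  rw [Ser.sum_apply, Multiset.map_map]
  have : ∀ p : W × W, ((Delta u p.1 * Delta v p.2 : Ser R)) b
      = ((splits b).map (fun q => Delta u p.1 q.1 * Delta v p.2 q.2)).sum := by
    intro p
    show convMul (Delta u p.1) (Delta v p.2) b = _
    exact convMul_eq_splits _ _ _
  simp only [Function.comp, this]
  -- LHS transform
  have lhs : ((shuffles a b).map (fun w => ((splits w).map (fun p => u p.1 * v p.2)).sum)).sum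
      = (((shuffles a b).bind splits).map (fun p => u p.1 * v p.2)).sum := by
    rw [Multiset.map_bind, Multiset.sum_bind]
  rw [lhs, bialg]
  simp only [Multiset.map_bind, Multiset.sum_bind, Multiset.map_map, Function.comp,
    Multiset.sum_map_mul_left, Multiset.sum_map_mul_right]
  have key : ∀ (u v : W → R) (S1 S2 : Multiset W),
      ((S1.map (fun a => ((S2.map (fun x => u a * v x)).sum))).sum)
        = (S1.map u).sum * (S2.map v).sum := by
    intros; simp [Multiset.sum_map_mul_left, Multiset.sum_map_mul_right]
  apply congrArg; apply Multiset.map_congr rfl; intro p _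
  apply congrArg; apply Multiset.map_congr rfl; intro q _
  exact key u v _ _

lemma length_mem_shuffles : ∀ (a b s : W), s ∈ shuffles a b → s.length = a.length + b.length
  | [], b, s => by
    rw [shuffles_nil_left]
    intro hs
    simp_all
  | x :: xs, [], s => by
    rw [shuffles_nil_right]
    intro hs
    simp_all
  | x :: xs, y :: ys, s => by
    rw [shuffles]
    intro hs
    rcases Multiset.mem_add.1 hs with h | h
    · obtain ⟨t, ht, rfl⟩ := Multiset.mem_map.1 h
      have := length_mem_shuffles xs (y :: ys) t ht
      simp [this]; omega
    · obtain ⟨t, ht, rfl⟩ := Multiset.mem_map.1 h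
      have := length_mem_shuffles (x :: xs) ys t ht
      simp [this]; omega
termination_by a b => a.length + b.length

lemma mem_of_mem_shuffles : ∀ (a b s : W), s ∈ shuffles a b → ∀ z ∈ s, z ∈ a ∨ z ∈ b
  | [], b, s => by
    rw [shuffles_nil_left]; intro hs; simp_all
  | x :: xs, [], s => by
    rw [shuffles_nil_right]; intro hs; simp_all
  | x :: xs, y :: ys, s => by
    rw [shuffles]
    intro hs z hz
    rcases Multiset.mem_add.1 hs with h | h <;> obtain ⟨t, ht, rfl⟩ := Multiset.mem_map.1 h
    · rcases List.mem_cons.1 hz with rfl | hz'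
      · simp
      · rcases mem_of_mem_shuffles xs (y :: ys) t ht z hz' with h' | h'
        · exact Or.inl (List.mem_cons_of_mem _ h')
        · exact Or.inr h'
    · rcases List.mem_cons.1 hz with rfl | hz'
      · simp
      · rcases mem_of_mem_shuffles (x :: xs) ys t ht z hz' with h' | h'
        · exact Or.inl h'
        · exact Or.inr (List.mem_cons_of_mem _ h')
termination_by a b => a.length + b.length

lemma Delta_one : Delta (1 : Ser R) = 1 := by
  funext a b
  show ((shuffles a b).map oneSeries).sum = (oneSeries (R := Ser R) a) b
  rcases eq_or_ne a [] with rfl | ha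
  · rw [shuffles_nil_left]
    simp [oneSeries, Ser.one_def]
  · have : ∀ s ∈ shuffles a b, oneSeries (R := R) s = 0 := by
      intro s hs
      have hl := length_mem_shuffles a b s hs
      have : s ≠ [] := by
        intro h; subst h
        simp at hl
        exact ha (List.length_eq_zero_iff.1 (by omega))
      simp [oneSeries, this]
    rw [Multiset.sum_eq_zero]
    · simp [oneSeries, ha, Ser.zero_apply]
    · intro z hz
      obtain ⟨s, hs, rfl⟩ := Multiset.mem_map.1 hz
      exact this s hs

def tens (u v : Ser R) : Ser (Ser R) := fun a b => u a * v b

lemma tens_mul {R : Type*} [CommSemiring R] (u v u' v' : Ser R) :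
    tens u v * tens u' v' = tens (u * u') (v * v') := by
  funext a b
  show (convMul (tens u v) (tens u' v') a) b = convMul u u' a * convMul v v' b
  rw [convMul_eq_splits (R := Ser R) (tens u v) (tens u' v') a, Ser.sum_apply, Multiset.map_map]
  rw [convMul_eq_splits (R := R) u u' a, convMul_eq_splits (R := R) v v' b]
  have : ∀ p : W × W, ((tens u v p.1 * tens u' v' p.2 : Ser R)) b
      = ((splits b).map (fun q => (u p.1 * u' p.2) * (v q.1 * v' q.2))).sum := by
    intro p
    show convMul (tens u v p.1) (tens u' v' p.2) b = _
    rw [convMul_eq_splits (R := R) (tens u v p.1) (tens u' v' p.2) b]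
    apply congrArg
    apply Multiset.map_congr rfl
    intro q _
    show u p.1 * v q.1 * (u' p.2 * v' q.2) = _
    ring
  simp only [Function.comp, this, Multiset.sum_map_mul_left]
  rw [Multiset.sum_map_mul_right]

lemma tens_one_one : tens (1 : Ser R) 1 = 1 := by
  funext a b
  show oneSeries a * oneSeries b = (oneSeries (R := Ser R) a) b
  rcases eq_or_ne a [] with rfl | ha
  · simp [Ser.one_def, oneSeries]
  · simp [oneSeries, ha, Ser.zero_apply]

lemma Delta_e1 : Delta (e1Series : Ser R) = tens e1Series 1 + tens 1 e1Series := by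
  funext a b
  have hadd : (tens e1Series 1 + tens 1 e1Series : Ser (Ser R)) a b
      = e1Series a * oneSeries b + oneSeries a * e1Series b := by
    rw [Ser.add_apply (R := Ser R) (tens e1Series 1) (tens 1 e1Series) a, Ser.add_apply]
    rfl
  rw [show Delta (e1Series : Ser R) a b = ((shuffles a b).map e1Series).sum from rfl, hadd]
  rcases eq_or_ne a [] with rfl | ha
  · rw [shuffles_nil_left]
    simp [e1Series, oneSeries]
  · rcases eq_or_ne b [] with rfl | hb
    · rw [shuffles_nil_right]
      simp [e1Series, oneSeries, ha]
    · have hz : ∀ s ∈ shuffles a b, e1Series (R := R) s = 0 := by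
        intro s hs
        have hl := length_mem_shuffles a b s hs
        have h2 : 2 ≤ s.length := by
          have h1 : 1 ≤ a.length := List.length_pos_iff.2 ha
          have h2 : 1 ≤ b.length := List.length_pos_iff.2 hb
          omega
        have : s ≠ [(1 : Fin 2)] := by
          intro h; rw [h] at h2; simp at h2
        simp [e1Series, this]
      rw [Multiset.sum_eq_zero]
      · simp [e1Series, oneSeries, ha, hb]
      · intro z hz'
        obtain ⟨s, hs, rfl⟩ := Multiset.mem_map.1 hz'
        exact hz s hs


lemma splits_concat (x : Fin 2) : ∀ (w : W),
    splits (w ++ [x]) = (w ++ [x], ([] : W)) ::ₘ (splits w).map (fun p => (p.1, p.2 ++ [x]))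
  | [] => by
    simp only [List.nil_append, splits, Multiset.map_singleton]
    exact Multiset.cons_swap _ _ _
  | z :: zs => by
    show splits (z :: (zs ++ [x])) = _
    rw [show splits (z :: (zs ++ [x])) = ([], z :: (zs ++ [x])) ::ₘ
        (splits (zs ++ [x])).map (fun p => (z :: p.1, p.2)) from rfl]
    rw [splits_concat x zs]
    rw [show splits (z :: zs) = ([], z :: zs) ::ₘ (splits zs).map (fun p => (z :: p.1, p.2)) from rfl]
    simp only [Multiset.map_cons, Multiset.map_map, Function.comp]
    rw [Multiset.cons_swap]
    rfl

lemma conv_e1_right_nil (u : W → R) : convMul u e1Series [] = 0 := by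
  rw [convMul_nil]; simp [e1Series]

lemma conv_e1_right_concat (u : W → R) (w : W) (x : Fin 2) :
    convMul u e1Series (w ++ [x]) = if x = 1 then u w else 0 := by
  rw [convMul_eq_splits, splits_concat, Multiset.map_cons, Multiset.sum_cons, Multiset.map_map]
  have he : e1Series (R := R) [] = 0 := by simp [e1Series]
  rw [he, mul_zero, zero_add]
  by_cases hx : x = (1 : Fin 2)
  · subst hx
    rw [if_pos rfl]
    have : ∀ p : W × W, e1Series (R := R) (p.2 ++ [1]) = oneSeries p.2 := by
      intro p
      rcases p with ⟨p1, p2⟩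
      cases p2 <;> simp [e1Series, oneSeries]
    calc ((splits w).map ((fun p => u p.1 * e1Series (p.2 ++ [1])) )).sum
        = ((splits w).map (fun p => u p.1 * oneSeries p.2)).sum := by
          apply congrArg; apply Multiset.map_congr rfl; intro p _
          show u p.1 * e1Series (p.2 ++ [1]) = _
          rw [this p]
      _ = convMul u oneSeries w := (convMul_eq_splits _ _ _).symm
      _ = u w := by rw [convMul_one_right]
  · rw [if_neg hx]
    apply Multiset.sum_eq_zero
    intro z hz
    obtain ⟨p, _, rfl⟩ := Multiset.mem_map.1 hz
    have : e1Series (R := R) (p.2 ++ [x]) = 0 := by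
      rcases p with ⟨p1, p2⟩
      cases p2 <;> simp [e1Series, hx]
    show u p.1 * e1Series (p.2 ++ [x]) = 0
    rw [this, mul_zero]

lemma conv_zero_fn (u : W → R) (w : W) : convMul (fun _ => (0 : R)) u w = 0 := by
  simp [convMul]

lemma conv_e1_left_nil (u : W → R) : convMul e1Series u [] = 0 := by
  rw [convMul_nil]; simp [e1Series]

lemma conv_e1_left_cons (u : W → R) (x : Fin 2) (w : W) :
    convMul e1Series u (x :: w) = if x = 1 then u w else 0 := by
  rw [convMul_cons]
  have he : e1Series (R := R) [] = 0 := by simp [e1Series]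
  rw [he, zero_mul, zero_add]
  by_cases hx : x = (1 : Fin 2)
  · subst hx
    rw [if_pos rfl]
    have : (fun s => e1Series (R := R) ((1:Fin 2) :: s)) = oneSeries := by
      funext s; cases s <;> simp [e1Series, oneSeries]
    rw [this, convMul_one_left]
  · rw [if_neg hx]
    have : (fun s => e1Series (R := R) (x :: s)) = fun _ => (0:R) := by
      funext s; simp [e1Series, hx]
    rw [this, conv_zero_fn]

lemma conv_iota_right (c : R) (u : W → R) :
    convMul u (fun w => if w = [] then c else 0) = fun w => u w * c := by
  funext w
  induction w generalizing u with
  | nil => rw [convMul_nil]; simp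
  | cons x xs ih =>
    rw [convMul_cons, ih (fun s => u (x :: s))]
    simp

lemma conv_iota_left (c : R) (u : W → R) :
    convMul (fun w => if w = [] then c else 0) u = fun w => c * u w := by
  funext w
  cases w with
  | nil => rw [convMul_nil]; simp
  | cons x xs =>
    rw [convMul_cons]
    have : (fun s => if x :: s = [] then c else 0) = fun _ => (0:R) := by
      funext s; simp
    rw [this, conv_zero_fn]
    simp

lemma tens_e1_one_eq : tens (e1Series : Ser R) 1 = (e1Series : Ser (Ser R)) := by
  funext a b
  show e1Series a * oneSeries b = (if a = [(1 : Fin 2)] then (1 : Ser R) else 0) b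
  by_cases ha : a = [(1 : Fin 2)]
  · simp [ha, e1Series, Ser.one_def]
  · simp [ha, e1Series, Ser.zero_apply]

lemma tens_one_e1_eq : tens (1 : Ser R) e1Series
    = fun a => if a = [] then (e1Series : Ser R) else 0 := by
  funext a b
  show oneSeries a * e1Series b = (if a = [] then (e1Series : Ser R) else 0) b
  by_cases ha : a = []
  · simp [ha, oneSeries]
  · simp [ha, oneSeries, Ser.zero_apply]

lemma convE1R_zero (v : W → R) {b : W} (hv : ∀ b', b'.length < b.length → v b' = 0) :
    convMul v e1Series b = 0 := by
  induction b using List.reverseRecOn with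
  | nil => exact conv_e1_right_nil v
  | append_singleton w x _ =>
    rw [conv_e1_right_concat]
    by_cases hx : x = (1:Fin 2)
    · rw [if_pos hx]; exact hv w (by simp)
    · rw [if_neg hx]

lemma convE1L_zero (v : W → R) {b : W} (hv : ∀ b', b'.length < b.length → v b' = 0) :
    convMul e1Series v b = 0 := by
  cases b with
  | nil => exact conv_e1_left_nil v
  | cons x w =>
    rw [conv_e1_left_cons]
    by_cases hx : x = (1:Fin 2)
    · rw [if_pos hx]; exact hv w (by simp)
    · rw [if_neg hx]

lemma convE1R_zero' (u : Ser (Ser R)) (a c : W)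
    (h : ∀ a', a'.length < a.length → u a' c = 0) :
    convMul (R := Ser R) u e1Series a c = 0 := by
  induction a using List.reverseRecOn with
  | nil => rw [conv_e1_right_nil (R := Ser R) u]; rfl
  | append_singleton w x _ =>
    rw [conv_e1_right_concat (R := Ser R) u w x]
    by_cases hx : x = (1:Fin 2)
    · rw [if_pos hx]; exact h w (by simp)
    · rw [if_neg hx]; rfl

lemma convE1L_zero' (u : Ser (Ser R)) (a c : W)
    (h : ∀ a', a'.length < a.length → u a' c = 0) :
    convMul (R := Ser R) e1Series u a c = 0 := by
  cases a with
  | nil => rw [conv_e1_left_nil (R := Ser R) u]; rfl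
  | cons x w =>
    rw [conv_e1_left_cons (R := Ser R) u x w]
    by_cases hx : x = (1:Fin 2)
    · rw [if_pos hx]; exact h w (by simp)
    · rw [if_neg hx]; rfl

def lead1 : W → ℕ
  | [] => 0
  | z :: t => if z = 1 then lead1 t + 1 else 0

lemma lead1_append_one : ∀ {a : W}, (0 : Fin 2) ∈ a → lead1 (a ++ [1]) = lead1 a := by
  intro a h
  induction a with
  | nil => simp at h
  | cons z t ih =>
    by_cases hz : z = (1 : Fin 2)
    · subst hz
      have ht : (0 : Fin 2) ∈ t := by
        rcases List.mem_cons.1 h with h' | h'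
        · exact absurd h' (by decide)
        · exact h'
      show lead1 ((1:Fin 2) :: (t ++ [1])) = _
      simp [lead1, ih ht]
    · show lead1 (z :: (t ++ [1])) = lead1 (z :: t)
      simp [lead1, hz]


section Key
variable {u : Ser (Ser R)}
  (CC : ∀ a b, convMul (R := Ser R) u e1Series a b + convMul (u a) e1Series b
      = convMul (R := Ser R) e1Series u a b + convMul e1Series (u a) b)
include CC

lemma keyL : ∀ (n : ℕ) (b : W), b.length = n → ∀ a : W, (0 : Fin 2) ∈ a → u a b = 0 := by
  intro n
  induction n using Nat.strong_induction_on with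
  | _ n IH =>
    intro b hb
    have outer : ∀ b', b'.length < b.length → ∀ a, (0:Fin 2) ∈ a → u a b' = 0 := by
      intro b' hlt a ha
      exact IH b'.length (by omega) b' rfl a ha
    have step : ∀ (z : Fin 2) (a' : W), (0:Fin 2) ∈ z :: a' →
        u (z :: a') b = (if z = 1 then u (a' ++ [1]) else 0) b := by
      intro z a' ha
      have mem1 : (0:Fin 2) ∈ (z :: a') ++ [1] := List.mem_append_left _ ha
      have h2 : convMul (u ((z :: a') ++ [1])) e1Series b = 0 :=
        convE1R_zero _ (fun b' hb' => outer b' hb' _ mem1)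
      have h4 : convMul e1Series (u ((z :: a') ++ [1])) b = 0 :=
        convE1L_zero _ (fun b' hb' => outer b' hb' _ mem1)
      have hcc := CC ((z :: a') ++ [1]) b
      rw [h2, h4, add_zero, add_zero] at hcc
      rw [conv_e1_right_concat (R := Ser R) u (z :: a') 1, if_pos rfl] at hcc
      rw [show (z :: a') ++ [1] = z :: (a' ++ [1]) from rfl,
        conv_e1_left_cons (R := Ser R) u z (a' ++ [1])] at hcc
      exact hcc
    suffices hsuff : ∀ (k : ℕ) (a : W), (0:Fin 2) ∈ a → lead1 a ≤ k → u a b = 0 by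
      intro a ha; exact hsuff (lead1 a) a ha le_rfl
    intro k
    induction k with
    | zero =>
      intro a ha hk
      cases a with
      | nil => simp at ha
      | cons z a' =>
        by_cases hz : z = (1 : Fin 2)
        · subst hz
          exfalso
          have : lead1 ((1:Fin 2) :: a') = lead1 a' + 1 := by simp [lead1]
          omega
        · rw [step z a' ha, if_neg hz]
          rfl
    | succ k ihk =>
      intro a ha hk
      cases a with
      | nil => simp at ha
      | cons z a' =>
        by_cases hz : z = (1 : Fin 2)
        · subst hz
          rw [step 1 a' ha, if_pos rfl]
          have ha' : (0:Fin 2) ∈ a' := by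
            rcases List.mem_cons.1 ha with h | h
            · exact absurd h (by decide)
            · exact h
          apply ihk
          · exact List.mem_append_left _ ha'
          · rw [lead1_append_one ha']
            have : lead1 ((1:Fin 2) :: a') = lead1 a' + 1 := by simp [lead1]
            omega
        · rw [step z a' ha, if_neg hz]
          rfl

lemma keyR : ∀ (n : ℕ) (a : W), a.length = n → ∀ b : W, (0 : Fin 2) ∈ b → u a b = 0 := by
  intro n
  induction n using Nat.strong_induction_on with
  | _ n IH =>
    intro a hlen
    have outer : ∀ a', a'.length < a.length → ∀ b, (0:Fin 2) ∈ b → u a' b = 0 := by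
      intro a' hlt b hb
      exact IH a'.length (by omega) a' rfl b hb
    have step : ∀ (z : Fin 2) (b' : W), (0:Fin 2) ∈ z :: b' →
        u a (z :: b') = if z = 1 then u a (b' ++ [1]) else 0 := by
      intro z b' hb
      have mem1 : (0:Fin 2) ∈ (z :: b') ++ [1] := List.mem_append_left _ hb
      have h1 : convMul (R := Ser R) u e1Series a ((z :: b') ++ [1]) = 0 :=
        convE1R_zero' u a _ (fun a' ha' => outer a' ha' _ mem1)
      have h3 : convMul (R := Ser R) e1Series u a ((z :: b') ++ [1]) = 0 :=
        convE1L_zero' u a _ (fun a' ha' => outer a' ha' _ mem1)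
      have hcc := CC a ((z :: b') ++ [1])
      rw [h1, h3, zero_add, zero_add] at hcc
      rw [conv_e1_right_concat (R := R) (u a) (z :: b') 1, if_pos rfl] at hcc
      rw [show (z :: b') ++ [1] = z :: (b' ++ [1]) from rfl,
        conv_e1_left_cons (R := R) (u a) z (b' ++ [1])] at hcc
      exact hcc
    suffices hsuff : ∀ (k : ℕ) (b : W), (0:Fin 2) ∈ b → lead1 b ≤ k → u a b = 0 by
      intro b hb; exact hsuff (lead1 b) b hb le_rfl
    intro k
    induction k with
    | zero =>
      intro b hb hk
      cases b with
      | nil => simp at hb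
      | cons z b' =>
        by_cases hz : z = (1 : Fin 2)
        · subst hz
          exfalso
          have : lead1 ((1:Fin 2) :: b') = lead1 b' + 1 := by simp [lead1]
          omega
        · rw [step z b' hb, if_neg hz]
    | succ k ihk =>
      intro b hb hk
      cases b with
      | nil => simp at hb
      | cons z b' =>
        by_cases hz : z = (1 : Fin 2)
        · subst hz
          rw [step 1 b' hb, if_pos rfl]
          have hb' : (0:Fin 2) ∈ b' := by
            rcases List.mem_cons.1 hb with h | h
            · exact absurd h (by decide)
            · exact h
          apply ihk
          · exact List.mem_append_left _ hb'
          · rw [lead1_append_one hb']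
            have : lead1 ((1:Fin 2) :: b') = lead1 b' + 1 := by simp [lead1]
            omega
        · rw [step z b' hb, if_neg hz]

end Key


lemma mem_splits : ∀ (w : W) (p : W × W), p ∈ splits w → p.1 ++ p.2 = w := by
  intro w
  induction w with
  | nil => intro p hp; simp [splits] at hp; simp [hp]
  | cons x xs ih =>
    intro p hp
    rcases Multiset.mem_cons.1 hp with rfl | hp'
    · rfl
    · obtain ⟨q, hq, rfl⟩ := Multiset.mem_map.1 hp'
      have := ih q hq
      simp [this]

lemma extract_last : ∀ (w : W) (G : W × W → R),
    (∀ p ∈ splits w, p.2 ≠ [] → G p = 0) → ((splits w).map G).sum = G (w, []) := by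
  intro w
  induction w with
  | nil => intro G _; simp [splits]
  | cons x xs ih =>
    intro G hG
    show ((((splits (x :: xs)))).map G).sum = _
    rw [show splits (x :: xs) = ([], x :: xs) ::ₘ (splits xs).map (fun p => (x :: p.1, p.2)) from rfl]
    rw [Multiset.map_cons, Multiset.sum_cons, Multiset.map_map]
    have h0 : G ([], x :: xs) = 0 := by
      apply hG _ (Multiset.mem_cons_self _ _)
      simp
    rw [h0, zero_add]
    have := ih (fun p => G (x :: p.1, p.2)) ?_
    · exact this
    · intro p hp hne
      exact hG _ (Multiset.mem_cons_of_mem (Multiset.mem_map_of_mem _ hp)) hne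

lemma fin2_eq_one {z : Fin 2} (h : z ≠ 0) : z = 1 := by omega

lemma eq_replicate_of_no_zero {a : W} (h : (0:Fin 2) ∉ a) : a = List.replicate a.length 1 := by
  apply List.eq_replicate_of_mem
  intro z hz
  by_contra hne
  have : z = 0 := by omega
  exact h (this ▸ hz)

lemma shuffle_replicate {a b s : W} (ha : (0:Fin 2) ∉ a) (hb : (0:Fin 2) ∉ b)
    (hs : s ∈ shuffles a b) : s = List.replicate (a.length + b.length) 1 := by
  have hlen := length_mem_shuffles a b s hs
  have hmem := mem_of_mem_shuffles a b s hs
  rw [← hlen]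
  apply List.eq_replicate_of_mem
  intro z hz
  rcases hmem z hz with h | h
  · by_contra hne
    exact ha ((by omega : z = 0) ▸ h)
  · by_contra hne
    exact hb ((by omega : z = 0) ▸ h)


lemma mul_e1S_coeff (U : Ser (Ser R)) (a b : W) :
    (U * tens e1Series (1 : Ser R)) a b = convMul (R := Ser R) U e1Series a b := by
  have hX : tens (e1Series : Ser R) 1 = (e1Series : Ser (Ser R)) := tens_e1_one_eq
  rw [hX]
  rfl

lemma mul_iotaE1_coeff (U : Ser (Ser R)) (a b : W) :
    (U * tens (1 : Ser R) e1Series) a b = convMul (U a) e1Series b := by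
  have hX : tens (1 : Ser R) e1Series
      = (fun a => if a = [] then (e1Series : Ser R) else 0) := tens_one_e1_eq
  rw [hX]
  show convMul (R := Ser R) U (fun w => if w = [] then (e1Series : Ser R) else 0) a b = _
  rw [conv_iota_right (R := Ser R) (e1Series : Ser R) U]
  exact rfl

lemma e1S_mul_coeff (U : Ser (Ser R)) (a b : W) :
    (tens e1Series (1 : Ser R) * U) a b = convMul (R := Ser R) e1Series U a b := by
  have hX : tens (e1Series : Ser R) 1 = (e1Series : Ser (Ser R)) := tens_e1_one_eq
  rw [hX]
  rfl

lemma iotaE1_mul_coeff (U : Ser (Ser R)) (a b : W) :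
    (tens (1 : Ser R) e1Series * U) a b = convMul e1Series (U a) b := by
  have hX : tens (1 : Ser R) e1Series
      = (fun a => if a = [] then (e1Series : Ser R) else 0) := tens_one_e1_eq
  rw [hX]
  show convMul (R := Ser R) (fun w => if w = [] then (e1Series : Ser R) else 0) U a b = _
  rw [conv_iota_left (R := Ser R) (e1Series : Ser R) U]
  exact rfl
end S17

open S17

/-- If `f` is grouplike then `h = f⁻¹ e₁ f` is a Lie series; conversely, if
`f[∅] = 1`, `f[e₁ⁿ] = 0` for all `n ≥ 1`, and `f⁻¹ e₁ f` is a Lie series,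
then `f` is grouplike. -/
theorem stmt_17 {R : Type*} [CommRing R] [Algebra ℚ R]
    (f g : List (Fin 2) → R) (hf1 : f [] = 1)
    (hinv₁ : convMul f g = oneSeries) (hinv₂ : convMul g f = oneSeries) :
    (IsGrouplike f → IsPrimitive (convMul (convMul g e1Series) f)) ∧
      ((∀ n : ℕ, 1 ≤ n → f (List.replicate n (1 : Fin 2)) = 0) →
        IsPrimitive (convMul (convMul g e1Series) f) → IsGrouplike f) := by
  let f' : Ser R := f
  let g' : Ser R := g
  let e1' : Ser R := e1Series
  have hfg : f' * g' = 1 := hinv₁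
  have hgf : g' * f' = 1 := hinv₂
  have hΔfg : Delta f' * Delta g' = 1 := by rw [← Delta_mul, hfg, Delta_one]
  have hΔgf : Delta g' * Delta f' = 1 := by rw [← Delta_mul, hgf, Delta_one]
  have htfg : tens f' f' * tens g' g' = 1 := by rw [tens_mul, hfg, tens_one_one]
  have htgf : tens g' g' * tens f' f' = 1 := by rw [tens_mul, hgf, tens_one_one]
  set h : Ser R := g' * e1' * f' with hh
  have hconv : convMul (convMul g e1Series) f = h := rfl
  have hcomp : tens g' g' * (tens e1Series 1 + tens 1 e1Series) * tens f' f'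
      = tens h 1 + tens 1 h := by
    rw [mul_add, add_mul, tens_mul g' g' e1Series 1, tens_mul _ _ f' f',
      tens_mul g' g' 1 e1Series, tens_mul _ _ f' f', mul_one, hgf]
  have hnil : h [] = 0 := by
    show convMul (convMul g e1Series) f [] = 0
    rw [convMul_nil, convMul_nil]
    simp [e1Series]
  constructor
  · -- forward direction
    intro hG
    have hΔf : Delta f' = tens f' f' := by
      funext a b; exact hG.2 a b
    have h2 : Delta f' * tens g' g' = 1 := by rw [hΔf, htfg]
    have hΔg : Delta g' = tens g' g' := left_inv_eq_right_inv hΔgf h2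
    have hΔh : Delta h = tens h 1 + tens 1 h := by
      rw [hh, Delta_mul, Delta_mul, hΔg, hΔf]
      rw [show Delta e1' = tens e1Series 1 + tens 1 e1Series from Delta_e1]
      exact hcomp
    rw [hconv]
    refine ⟨hnil, ?_⟩
    intro w1 w2 hw1 hw2
    have hev := congrFun (congrFun hΔh w1) w2
    rw [Ser.add_apply (R := Ser R) (tens h 1) (tens 1 h) w1, Ser.add_apply] at hev
    have hzero : tens h 1 w1 w2 + tens 1 h w1 w2 = 0 := by
      show h w1 * oneSeries w2 + oneSeries w1 * h w2 = 0
      simp [oneSeries, hw1, hw2]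
    rw [hzero] at hev
    exact hev
  · -- converse direction
    intro hz hP
    rw [hconv] at hP
    have hΔh : Delta h = tens h 1 + tens 1 h := by
      funext a b
      have hres : tens h 1 a b + tens 1 h a b = h a * oneSeries b + oneSeries a * h b := rfl
      rw [Ser.add_apply (R := Ser R) (tens h 1) (tens 1 h) a, Ser.add_apply, hres]
      rcases eq_or_ne a [] with rfl | ha
      · show ((shuffles [] b).map h).sum = _
        rw [shuffles_nil_left]
        simp [oneSeries, hP.1]
        exact (congrArg Multiset.sum (Multiset.map_singleton (f := (h : W → R)) b)).trans
          (Multiset.sum_singleton _)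
      · rcases eq_or_ne b [] with rfl | hb
        · show ((shuffles a []).map h).sum = _
          rw [shuffles_nil_right]
          simp [oneSeries, ha, hP.1]
          exact (congrArg Multiset.sum (Multiset.map_singleton (f := (h : W → R)) a)).trans
            (Multiset.sum_singleton _)
        · show ((shuffles a b).map h).sum = _
          rw [hP.2 a b ha hb]
          simp [oneSeries, ha, hb]
    set E : Ser (Ser R) := tens e1Series 1 + tens 1 e1Series with hE
    set U : Ser (Ser R) := Delta f' * tens g' g' with hU
    have hEq : Delta g' * E * Delta f' = tens g' g' * E * tens f' f' := by
      have h1 : Delta g' * E * Delta f' = Delta h := by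
        rw [hh, Delta_mul, Delta_mul]
        rw [show Delta e1' = tens e1Series 1 + tens 1 e1Series from Delta_e1]
      rw [h1, hΔh, ← hcomp]
    have hcomm : U * E = E * U := by
      have c1 : E * U = (E * Delta f') * tens g' g' := by rw [hU, mul_assoc]
      have c2 : E * Delta f' = Delta f' * (Delta g' * E * Delta f') := by
        rw [show Delta g' * E * Delta f' = Delta g' * (E * Delta f') from mul_assoc _ _ _]
        rw [← mul_assoc, hΔfg, one_mul]
      have c3 : (Delta f' * (tens g' g' * E * tens f' f')) * tens g' g' = U * E := by
        rw [mul_assoc (Delta f') (tens g' g' * E * tens f' f') (tens g' g'),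
          mul_assoc (tens g' g' * E) (tens f' f') (tens g' g'), htfg, mul_one, hU, mul_assoc]
      rw [c1, c2, hEq, c3]
    have hL : ∀ a b, (U * E) a b
        = convMul (R := Ser R) U e1Series a b + convMul (U a) e1Series b := by
      intro a b
      rw [hE, mul_add]
      rw [Ser.add_apply (R := Ser R) (HMul.hMul U (tens e1Series 1))
        (HMul.hMul U (tens 1 e1Series)) a, Ser.add_apply]
      rw [mul_e1S_coeff, mul_iotaE1_coeff]
    have hR : ∀ a b, (E * U) a b
        = convMul (R := Ser R) e1Series U a b + convMul e1Series (U a) b := by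
      intro a b
      rw [hE, add_mul]
      rw [Ser.add_apply (R := Ser R) (HMul.hMul (tens e1Series 1) U)
        (HMul.hMul (tens 1 e1Series) U) a, Ser.add_apply]
      rw [e1S_mul_coeff, iotaE1_mul_coeff]
    have CC : ∀ a b, convMul (R := Ser R) U e1Series a b + convMul (U a) e1Series b
        = convMul (R := Ser R) e1Series U a b + convMul e1Series (U a) b := by
      intro a b
      rw [← hL, ← hR, hcomm]
    have hzero : ∀ a b, ((0:Fin 2) ∈ a ∨ (0:Fin 2) ∈ b) → U a b = 0 := by
      intro a b hab
      rcases hab with hx | hx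
      · exact keyL CC b.length b rfl a hx
      · exact keyR CC a.length a rfl b hx
    have hΔfU : Delta f' = U * tens f' f' := by
      rw [hU, mul_assoc, htgf, mul_one]
    have hfz : ∀ c : W, (0:Fin 2) ∉ c → c ≠ [] → f c = 0 := by
      intro c hc hne
      rw [eq_replicate_of_no_zero hc]
      exact hz c.length (by
        have := List.length_pos_iff.2 hne
        omega)
    have hone : ∀ a b, U a b = (1 : Ser (Ser R)) a b := by
      intro a b
      by_cases ha : (0:Fin 2) ∈ a
      · rw [hzero a b (Or.inl ha), Ser.one_def]
        have hne : a ≠ [] := List.ne_nil_of_mem ha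
        simp [oneSeries, hne, Ser.zero_apply]
      · by_cases hb : (0:Fin 2) ∈ b
        · rw [hzero a b (Or.inr hb), Ser.one_def]
          have hne : b ≠ [] := List.ne_nil_of_mem hb
          by_cases ha0 : a = []
          · subst ha0
            simp [oneSeries, hne, Ser.one_def, Ser.zero_apply]
          · simp [oneSeries, ha0, Ser.zero_apply]
        · -- both replicate words
          have hev := congrFun (congrFun hΔfU a) b
          have hsub : ∀ (c : W) (p : W × W), p ∈ splits c → ((0:Fin 2) ∉ c) →
              p.2 ≠ [] → f p.2 = 0 := by
            intro c p hp hc hne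
            apply hfz _ _ hne
            intro hmem
            exact hc (by
              rw [← mem_splits c p hp]
              exact List.mem_append_right _ hmem)
          have hRHS : (U * tens f' f') a b = U a b := by
            rw [Ser.mul_def, convMul_eq_splits (R := Ser R) U (tens f' f') a, Ser.sum_apply,
              Multiset.map_map]
            have helt : ∀ p : W × W, ((U p.1 * tens f' f' p.2 : Ser R)) b
                = ((splits b).map (fun q => U p.1 q.1 * (f p.2 * f q.2))).sum := by
              intro p
              show convMul (U p.1) (tens f' f' p.2) b = _
              rw [convMul_eq_splits (R := R) (U p.1) (tens f' f' p.2) b]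
              rfl
            calc ((splits a).map (fun p => ((U p.1 * tens f' f' p.2 : Ser R)) b)).sum
                = ((splits a).map (fun p =>
                    ((splits b).map (fun q => U p.1 q.1 * (f p.2 * f q.2))).sum)).sum := by
                  apply congrArg
                  exact Multiset.map_congr rfl (fun p _ => helt p)
              _ = ((splits b).map (fun q => U a q.1 * (f [] * f q.2))).sum := by
                  apply extract_last a
                  intro p hp hne
                  apply Multiset.sum_eq_zero
                  intro z hz'
                  obtain ⟨q, _, rfl⟩ := Multiset.mem_map.1 hz'
                  rw [hsub a p hp ha hne, zero_mul, mul_zero]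
              _ = U a b * (f [] * f []) := by
                  apply extract_last b (fun q => U a q.1 * (f [] * f q.2))
                  intro q hq hne
                  rw [hsub b q hq hb hne, mul_zero, mul_zero]
              _ = U a b := by rw [hf1, one_mul, mul_one]
          rw [hRHS] at hev
          rw [← hev, Ser.one_def]
          by_cases ha0 : a = []
          · subst ha0
            by_cases hb0 : b = []
            · subst hb0
              show ((shuffles [] []).map f).sum = _
              rw [shuffles_nil_left]
              simp [oneSeries, hf1, Ser.one_def]
            · show ((shuffles [] b).map f).sum = _
              rw [shuffles_nil_left]
              simp only [Multiset.map_singleton, Multiset.sum_singleton]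
              rw [hfz b hb hb0]
              simp [oneSeries, hb0, Ser.one_def]
          · have hsz : Delta f' a b = 0 := by
              apply Multiset.sum_eq_zero
              intro z hz'
              obtain ⟨s, hs, rfl⟩ := Multiset.mem_map.1 hz'
              rw [shuffle_replicate ha hb hs]
              apply hz
              have := List.length_pos_iff.2 ha0
              omega
            rw [hsz]
            simp [oneSeries, ha0, Ser.zero_apply]
    have hU1 : U = 1 := by
      funext a b; exact hone a b
    have hΔft : Delta f' = tens f' f' := by
      rw [hΔfU, hU1, one_mul]
    exact ⟨hf1, fun w1 w2 => congrFun (congrFun hΔft w1) w2⟩
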